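/- For β > 0 and positive integers n, k, the k-th Fourier coefficient of ν_{β,n} is ∑_{z : z^n = 1} z^k · ν_{β,n}({z}) = (n/gcd(n,k))^{-β} · ∑_{d | n/gcd(n,k)} μ(d) φ_β(d)/φ(d). -/

import Mathlib

open Polynomial ArithmeticFunction

/-- Generalized totient function: `φ_β(d) = d^β ∏_{p | d} (1 − p^{-β})`. -/
noncomputable def phiBeta (β : ℝ) (d : ℕ) : ℝ :=
  (d : ℝ) ^ β * ∏ p ∈ d.primeFactors, (1 - (p : ℝ) ^ (-β))

/-- The weight of `ν_{β,m}` at a root of unity `z`. -/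
noncomputable def nuWeight (β : ℝ) (m : ℕ) (z : ℂ) : ℝ :=
  (m : ℝ) ^ (-β) * phiBeta β (orderOf z) / (Nat.totient (orderOf z) : ℝ)

open Finset
noncomputable def rr (β : ℝ) (d : ℕ) : ℝ := phiBeta β d / (Nat.totient d : ℝ)

lemma rr_one (β : ℝ) : rr β 1 = 1 := by simp [rr, phiBeta]

lemma rr_mul (β : ℝ) {m n : ℕ} (hm : m ≠ 0) (hn : n ≠ 0) (h : Nat.Coprime m n) :
    rr β (m * n) = rr β m * rr β n := by
  unfold rr phiBeta
  rw [Nat.totient_mul h, Nat.primeFactors_mul hm hn,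
    Finset.prod_union (Nat.Coprime.disjoint_primeFactors h)]
  push_cast
  rw [Real.mul_rpow (by positivity) (by positivity)]
  ring

noncomputable def rC (β : ℝ) : ArithmeticFunction ℂ :=
  ⟨fun d => ((rr β d : ℝ) : ℂ), by simp [rr]⟩

lemma rC_apply (β : ℝ) (d : ℕ) : rC β d = ((rr β d : ℝ) : ℂ) := rfl

lemma isMult_rC (β : ℝ) : (rC β).IsMultiplicative := by
  refine ⟨by simp [rC_apply, rr_one], ?_⟩
  intro m n h
  rcases eq_or_ne m 0 with rfl | hm
  · obtain rfl : n = 1 := Nat.coprime_zero_left n |>.mp h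
    simp [rC_apply, rr_one]
  rcases eq_or_ne n 0 with rfl | hn
  · obtain rfl : m = 1 := Nat.coprime_zero_right m |>.mp h
    simp [rC_apply, rr_one]
  simp only [rC_apply, rr_mul β hm hn h, Complex.ofReal_mul]

noncomputable def SkF (k : ℕ) : ArithmeticFunction ℂ :=
  ⟨fun e => if e ∣ k then (e : ℂ) else 0, by simp⟩

lemma SkF_apply (k e : ℕ) : SkF k e = if e ∣ k then (e : ℂ) else 0 := rfl

lemma isMult_SkF (k : ℕ) : (SkF k).IsMultiplicative := by
  refine ⟨by simp [SkF_apply], ?_⟩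
  intro m n h
  simp only [SkF_apply]
  by_cases hm : m ∣ k
  · by_cases hn : n ∣ k
    · rw [if_pos (h.mul_dvd_of_dvd_of_dvd hm hn), if_pos hm, if_pos hn]; push_cast; ring
    · rw [if_neg (fun hd => hn ((dvd_mul_left n m).trans hd)), if_pos hm,
        if_neg hn, mul_zero]
  · rw [if_neg (fun hd => hm ((dvd_mul_right m n).trans hd)), if_neg hm, zero_mul]

noncomputable def fC (β : ℝ) (k : ℕ) : ArithmeticFunction ℂ :=
  ((moebius : ArithmeticFunction ℤ) * SkF k : ArithmeticFunction ℂ).pmul (rC β)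

lemma isMult_fC (β : ℝ) (k : ℕ) : (fC β k).IsMultiplicative := by
  have h1 : ((moebius : ArithmeticFunction ℤ) * SkF k :
      ArithmeticFunction ℂ).IsMultiplicative := by
    have := (isMultiplicative_moebius).intCast (R := ℂ)
    exact this.mul (isMult_SkF k)
  exact h1.pmul (isMult_rC β)

noncomputable def LF (β : ℝ) (k : ℕ) : ArithmeticFunction ℂ :=
  ((zeta : ArithmeticFunction ℕ) : ArithmeticFunction ℂ) * fC β k

lemma isMult_LF (β : ℝ) (k : ℕ) : (LF β k).IsMultiplicative :=
  (isMultiplicative_zeta.natCast).mul (isMult_fC β k)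

lemma LF_apply (β : ℝ) (k n : ℕ) : LF β k n = ∑ d ∈ n.divisors, fC β k d :=
  coe_zeta_mul_apply

/-- The inner Möbius sum as arithmetic function -/
noncomputable def sig (β : ℝ) : ArithmeticFunction ℂ :=
  ((zeta : ArithmeticFunction ℕ) : ArithmeticFunction ℂ) *
    (((moebius : ArithmeticFunction ℤ) : ArithmeticFunction ℂ).pmul (rC β))

lemma isMult_sig (β : ℝ) : (sig β).IsMultiplicative :=
  (isMultiplicative_zeta.natCast).mul
    ((isMultiplicative_moebius.intCast).pmul (isMult_rC β))

lemma sig_apply (β : ℝ) (n : ℕ) :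
    sig β n = ∑ d ∈ n.divisors, ((moebius d : ℂ) * ((rr β d : ℝ) : ℂ)) := by
  rw [sig, coe_zeta_mul_apply]
  refine Finset.sum_congr rfl fun d _ => ?_
  simp [pmul_apply, intCoe_apply, rC_apply]

lemma gcd_mul_coprime {m n : ℕ} (k : ℕ) (h : Nat.Coprime m n) :
    Nat.gcd (m * n) k = Nat.gcd m k * Nat.gcd n k := by
  apply Nat.dvd_antisymm
  · have h1 : Nat.gcd (m*n) k ∣ Nat.gcd (Nat.gcd (m*n) k) m * Nat.gcd (Nat.gcd (m*n) k) n :=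
      Nat.dvd_gcd_mul_gcd_iff_dvd_mul.mpr (Nat.gcd_dvd_left _ _)
    exact h1.trans (Nat.mul_dvd_mul
      (Nat.dvd_gcd (Nat.gcd_dvd_right _ _) ((Nat.gcd_dvd_left _ _).trans (Nat.gcd_dvd_right _ _)))
      (Nat.dvd_gcd (Nat.gcd_dvd_right _ _) ((Nat.gcd_dvd_left _ _).trans (Nat.gcd_dvd_right _ _))))
  · refine Nat.dvd_gcd (Nat.mul_dvd_mul (Nat.gcd_dvd_left _ _) (Nat.gcd_dvd_left _ _)) ?_
    have hcop : Nat.Coprime (Nat.gcd m k) (Nat.gcd n k) :=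
      Nat.Coprime.coprime_dvd_left (Nat.gcd_dvd_left _ _)
        (Nat.Coprime.coprime_dvd_right (Nat.gcd_dvd_left _ _) h)
    exact hcop.mul_dvd_of_dvd_of_dvd (Nat.gcd_dvd_right _ _) (Nat.gcd_dvd_right _ _)

noncomputable def Rfun (β : ℝ) (k : ℕ) : ArithmeticFunction ℂ :=
  ⟨fun n => if n = 0 then 0 else
    (((Nat.gcd n k : ℝ) ^ β : ℝ) : ℂ) * sig β (n / Nat.gcd n k), if_pos rfl⟩

lemma Rfun_apply (β : ℝ) (k : ℕ) {n : ℕ} (hn : n ≠ 0) :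
    Rfun β k n = (((Nat.gcd n k : ℝ) ^ β : ℝ) : ℂ) * sig β (n / Nat.gcd n k) :=
  if_neg hn

lemma isMult_Rfun (β : ℝ) (k : ℕ) (hk : k ≠ 0) : (Rfun β k).IsMultiplicative := by
  constructor
  · rw [Rfun_apply β k one_ne_zero]
    simp [Nat.gcd_one_left, (isMult_sig β).map_one]
  · intro m n h
    rcases eq_or_ne m 0 with rfl | hm
    · obtain rfl : n = 1 := Nat.coprime_zero_left n |>.mp h
      simp [Rfun, Rfun_apply β k one_ne_zero, Nat.gcd_one_left, (isMult_sig β).map_one]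
    rcases eq_or_ne n 0 with rfl | hn
    · obtain rfl : m = 1 := Nat.coprime_zero_right m |>.mp h
      simp [Rfun, Rfun_apply β k one_ne_zero, Nat.gcd_one_left, (isMult_sig β).map_one]
    rw [Rfun_apply β k (mul_ne_zero hm hn), Rfun_apply β k hm, Rfun_apply β k hn,
      gcd_mul_coprime k h]
    have hdm : Nat.gcd m k ∣ m := Nat.gcd_dvd_left m k
    have hdn : Nat.gcd n k ∣ n := Nat.gcd_dvd_left n k
    have hdiv : m * n / (Nat.gcd m k * Nat.gcd n k) = (m / Nat.gcd m k) * (n / Nat.gcd n k) :=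
      (Nat.div_mul_div_comm hdm hdn).symm
    have hcop' : Nat.Coprime (m / Nat.gcd m k) (n / Nat.gcd n k) :=
      Nat.Coprime.coprime_dvd_left (Nat.div_dvd_of_dvd hdm)
        (Nat.Coprime.coprime_dvd_right (Nat.div_dvd_of_dvd hdn) h)
    rw [hdiv, (isMult_sig β).map_mul_of_coprime hcop']
    push_cast
    rw [Real.mul_rpow (by positivity) (by positivity)]
    push_cast
    ring

lemma sum_pow_nthRoots (m k : ℕ) (hm : 0 < m) :
    ∑ z ∈ nthRootsFinset m (1 : ℂ), z ^ k = if m ∣ k then (m : ℂ) else 0 := by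
  have : NeZero m := ⟨hm.ne'⟩
  obtain ⟨z0, h⟩ : ∃ z0 : ℂ, IsPrimitiveRoot z0 m :=
    ⟨_, Complex.isPrimitiveRoot_exp m hm.ne'⟩
  have key : ∑ z ∈ nthRootsFinset m (1 : ℂ), z ^ k = ∑ i ∈ range m, ((z0 ^ i) ^ k) := by
    refine (Finset.sum_bij (fun i _ => z0 ^ i) ?_ ?_ ?_ ?_).symm
    · intro a _
      rw [mem_nthRootsFinset hm, ← pow_mul, mul_comm, pow_mul, h.pow_eq_one, one_pow]
    · intro a ha b hb hab
      exact h.pow_inj (mem_range.mp ha) (mem_range.mp hb) hab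
    · intro z hz
      obtain ⟨i, hi, rfl⟩ := h.eq_pow_of_pow_eq_one ((mem_nthRootsFinset hm (1 : ℂ)).1 hz)
      exact ⟨i, mem_range.mpr hi, rfl⟩
    · intro a _; rfl
  rw [key]
  have hpow : ∀ i, (z0 ^ i) ^ k = (z0 ^ k) ^ i := fun i => by
    rw [← pow_mul, mul_comm, pow_mul]
  simp_rw [hpow]
  by_cases hd : m ∣ k
  · rw [if_pos hd, (h.pow_eq_one_iff_dvd k).2 hd]
    simp
  · rw [if_neg hd, geom_sum_eq (fun h1 => hd ((h.pow_eq_one_iff_dvd k).1 h1)) m,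
      ← pow_mul, mul_comm, pow_mul, h.pow_eq_one, one_pow, sub_self, zero_div]

lemma sum_primroots (k : ℕ) : ∀ d > 0, ∑ z ∈ primitiveRoots d ℂ, z ^ k =
    ((moebius : ArithmeticFunction ℤ) * SkF k : ArithmeticFunction ℂ) d := by
  have base : ∀ m > 0, ∑ e ∈ m.divisors, (∑ z ∈ primitiveRoots e ℂ, z ^ k) =
      (fun m => if m ∣ k then (m : ℂ) else 0) m := by
    intro m hm
    obtain ⟨z0, h⟩ : ∃ z0 : ℂ, IsPrimitiveRoot z0 m :=
      ⟨_, Complex.isPrimitiveRoot_exp m hm.ne'⟩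
    show ∑ e ∈ m.divisors, (∑ z ∈ primitiveRoots e ℂ, z ^ k) = if m ∣ k then (m : ℂ) else 0
    rw [← sum_pow_nthRoots m k hm, IsPrimitiveRoot.nthRoots_one_eq_biUnion_primitiveRoots,
      Finset.sum_biUnion (fun a _ b _ hab => IsPrimitiveRoot.disjoint hab)]
  have := (sum_eq_iff_sum_smul_moebius_eq
    (f := fun d => ∑ z ∈ primitiveRoots d ℂ, z ^ k)
    (g := fun m => if m ∣ k then (m : ℂ) else 0)).mp base
  intro d hd
  rw [← this d hd, mul_apply]
  refine Finset.sum_congr rfl fun x hx => ?_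
  rw [intCoe_apply, SkF_apply, zsmul_eq_mul]

lemma sumL (β : ℝ) (k n : ℕ) (hn : 0 < n) :
    ∑ z ∈ nthRootsFinset n (1 : ℂ), z ^ k * ((rr β (orderOf z) : ℝ) : ℂ) = LF β k n := by
  obtain ⟨z0, h⟩ : ∃ z0 : ℂ, IsPrimitiveRoot z0 n :=
    ⟨_, Complex.isPrimitiveRoot_exp n hn.ne'⟩
  rw [LF_apply, IsPrimitiveRoot.nthRoots_one_eq_biUnion_primitiveRoots, Finset.sum_biUnion
    (fun a _ b _ hab => IsPrimitiveRoot.disjoint hab)]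
  refine Finset.sum_congr rfl fun d hd => ?_
  have hdpos : 0 < d := Nat.pos_of_mem_divisors hd
  have horder : ∀ z ∈ primitiveRoots d ℂ, orderOf z = d := fun z hz =>
    ((isPrimitiveRoot_of_mem_primitiveRoots hz).eq_orderOf).symm
  calc ∑ z ∈ primitiveRoots d ℂ, z ^ k * ((rr β (orderOf z) : ℝ) : ℂ)
      = ∑ z ∈ primitiveRoots d ℂ, z ^ k * ((rr β d : ℝ) : ℂ) :=
        Finset.sum_congr rfl fun z hz => by rw [horder z hz]
    _ = (∑ z ∈ primitiveRoots d ℂ, z ^ k) * ((rr β d : ℝ) : ℂ) := by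
        rw [Finset.sum_mul]
    _ = fC β k d := by rw [sum_primroots k d hdpos, fC, pmul_apply, rC_apply]

section PrimePow

variable {β : ℝ} {p : ℕ}

lemma rr_prime_pow (pp : p.Prime) (j : ℕ) :
    rr β (p ^ (j + 1)) =
      ((p : ℝ) ^ (j + 1)) ^ β * (1 - (p : ℝ) ^ (-β)) / ((p : ℝ) ^ j * ((p : ℝ) - 1)) := by
  have h1 : ((p - 1 : ℕ) : ℝ) = (p : ℝ) - 1 := by
    rw [Nat.cast_sub pp.one_lt.le]; norm_num
  unfold rr phiBeta
  rw [Nat.primeFactors_prime_pow (Nat.succ_ne_zero j) pp, Finset.prod_singleton,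
    Nat.totient_prime_pow pp (Nat.succ_pos j), Nat.succ_sub_one]
  push_cast [h1]
  ring

lemma rr_prime (pp : p.Prime) :
    rr β p = (p : ℝ) ^ β * (1 - (p : ℝ) ^ (-β)) / ((p : ℝ) - 1) := by
  have := rr_prime_pow (β := β) pp 0
  simpa using this

lemma X_succ (pp : p.Prime) (hβ : 0 < β) (j : ℕ) :
    ((p : ℝ) ^ (j + 1)) ^ β = ((p : ℝ) ^ j) ^ β * (p : ℝ) ^ β := by
  rw [pow_succ, Real.mul_rpow (by positivity) (by positivity)]

lemma key_cancel (pp : p.Prime) (j : ℕ) (hβ : 0 < β) :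
    (((p : ℝ) ^ (j + 1)) ^ β) * (p : ℝ) ^ (-β) = ((p : ℝ) ^ j) ^ β := by
  have hp : (0 : ℝ) < p := by exact_mod_cast pp.pos
  rw [X_succ pp hβ j, mul_assoc, ← Real.rpow_add hp, add_neg_cancel, Real.rpow_zero, mul_one]

lemma identA (pp : p.Prime) (hβ : 0 < β) (j : ℕ) :
    ((p : ℝ) ^ (j + 1) - (p : ℝ) ^ j) * rr β (p ^ (j + 1)) =
      ((p : ℝ) ^ (j + 1)) ^ β - ((p : ℝ) ^ j) ^ β := by
  have hp1 : (1 : ℝ) < p := by exact_mod_cast pp.one_lt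
  have hpos : (0 : ℝ) < (p : ℝ) ^ j * ((p : ℝ) - 1) := by
    apply mul_pos (by positivity) (by linarith)
  rw [rr_prime_pow pp j]
  have hfac : (p : ℝ) ^ (j + 1) - (p : ℝ) ^ j = (p : ℝ) ^ j * ((p : ℝ) - 1) := by ring
  rw [hfac, mul_div_assoc', mul_comm, mul_div_assoc, div_self hpos.ne', mul_one,
    mul_sub, mul_one, key_cancel pp j hβ]

lemma identB (pp : p.Prime) (hβ : 0 < β) (v : ℕ) :
    ((p : ℝ) ^ v) * rr β (p ^ (v + 1)) = ((p : ℝ) ^ v) ^ β * rr β p := by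
  have hp1 : (1 : ℝ) < p := by exact_mod_cast pp.one_lt
  have h1 : ((p : ℝ) ^ v) ≠ 0 := by positivity
  have h2 : ((p : ℝ) - 1) ≠ 0 := by linarith
  rw [rr_prime_pow pp v, rr_prime pp, X_succ pp hβ v]
  field_simp

end PrimePow

lemma gcd_prime_pow {p k : ℕ} (pp : p.Prime) (hk : k ≠ 0) (i : ℕ) :
    Nat.gcd (p ^ i) k = p ^ (min i (k.factorization p)) := by
  apply Nat.dvd_antisymm
  · obtain ⟨a, ha, hg⟩ := (Nat.dvd_prime_pow pp).1 (Nat.gcd_dvd_left (p ^ i) k)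
    have hak : p ^ a ∣ k := hg ▸ Nat.gcd_dvd_right (p ^ i) k
    have hav : a ≤ k.factorization p := (Nat.Prime.pow_dvd_iff_le_factorization pp hk).1 hak
    rw [hg]
    exact pow_dvd_pow p (le_min ha hav)
  · exact Nat.dvd_gcd (pow_dvd_pow p (min_le_left _ _))
      ((Nat.Prime.pow_dvd_iff_le_factorization pp hk).2 (min_le_right _ _))

lemma SkF_prime_pow {p k : ℕ} (pp : p.Prime) (hk : k ≠ 0) (a : ℕ) :
    SkF k (p ^ a) = if a ≤ k.factorization p then ((p ^ a : ℕ) : ℂ) else 0 := by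
  rw [SkF_apply]
  by_cases h : a ≤ k.factorization p
  · rw [if_pos ((Nat.Prime.pow_dvd_iff_le_factorization pp hk).2 h), if_pos h]
  · rw [if_neg (fun hd => h ((Nat.Prime.pow_dvd_iff_le_factorization pp hk).1 hd)), if_neg h]

lemma muSk_prime_pow {p : ℕ} (pp : p.Prime) (k : ℕ) (j : ℕ) :
    ((moebius : ArithmeticFunction ℤ) * SkF k : ArithmeticFunction ℂ) (p ^ (j + 1)) =
      SkF k (p ^ (j + 1)) - SkF k (p ^ j) := by
  rw [mul_apply, Nat.sum_divisorsAntidiagonal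
    (f := fun a b => ((moebius : ArithmeticFunction ℤ) : ArithmeticFunction ℂ) a * SkF k b),
    Nat.divisors_prime_pow pp, Finset.sum_map]
  simp only [Function.Embedding.coeFn_mk]
  rw [Finset.sum_range_succ', Finset.sum_range_succ']
  have hzero : ∀ i ∈ Finset.range j,
      ((moebius : ArithmeticFunction ℤ) : ArithmeticFunction ℂ) (p ^ (i + 1 + 1)) *
        SkF k (p ^ (j + 1) / p ^ (i + 1 + 1)) = 0 := by
    intro i _
    rw [intCoe_apply, moebius_apply_prime_pow pp (Nat.succ_ne_zero _), if_neg (by omega)]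
    simp
  rw [Finset.sum_congr rfl hzero, Finset.sum_const_zero, zero_add]
  have hd1 : p ^ (j + 1) / p = p ^ j := by
    rw [pow_succ, Nat.mul_div_cancel _ pp.pos]
  rw [intCoe_apply, intCoe_apply, pow_zero, pow_one, moebius_apply_one,
    moebius_apply_prime pp, Nat.div_one, hd1]
  push_cast
  ring

lemma LF_prime_pow (β : ℝ) (hβ : 0 < β) {k p : ℕ} (hk : k ≠ 0) (pp : p.Prime) (i : ℕ) :
    LF β k (p ^ i) =
      if i ≤ k.factorization p then (((((p : ℝ) ^ i) ^ β : ℝ)) : ℂ)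
      else (((((p : ℝ) ^ (k.factorization p)) ^ β : ℝ)) : ℂ) * (1 - ((rr β p : ℝ) : ℂ)) := by
  set v := k.factorization p with hv
  induction i with
  | zero =>
    rw [if_pos (Nat.zero_le v), pow_zero, (isMult_LF β k).map_one]
    norm_num
  | succ i ih =>
    have hstep : LF β k (p ^ (i + 1)) = LF β k (p ^ i) + fC β k (p ^ (i + 1)) := by
      rw [LF_apply, LF_apply, Nat.divisors_prime_pow pp, Nat.divisors_prime_pow pp,
        Finset.sum_map, Finset.sum_map, Finset.sum_range_succ]
      simp only [Function.Embedding.coeFn_mk]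
    have hfc : fC β k (p ^ (i + 1)) =
        (SkF k (p ^ (i + 1)) - SkF k (p ^ i)) * ((rr β (p ^ (i + 1)) : ℝ) : ℂ) := by
      rw [fC, pmul_apply, muSk_prime_pow pp k i, rC_apply]
    by_cases hc1 : i + 1 ≤ v
    · have hc0 : i ≤ v := by omega
      rw [hstep, ih, if_pos hc0, if_pos hc1, hfc,
        SkF_prime_pow pp hk (i+1), SkF_prime_pow pp hk i, if_pos hc1, if_pos hc0]
      have hA : (((p ^ (i+1) : ℕ) : ℂ) - ((p ^ i : ℕ) : ℂ)) * ((rr β (p ^ (i+1)) : ℝ) : ℂ)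
          = (((((p : ℝ) ^ (i+1) - (p : ℝ) ^ i) * rr β (p ^ (i+1))) : ℝ) : ℂ) := by
        push_cast; ring
      rw [hA, identA pp hβ i]
      push_cast; ring
    · by_cases hc0 : i ≤ v
      · have hiv : i = v := by omega
        rw [hstep, ih, if_pos hc0, if_neg hc1, hfc,
          SkF_prime_pow pp hk (i+1), SkF_prime_pow pp hk i, if_neg hc1, if_pos hc0]
        have hB : ((0 : ℂ) - ((p ^ i : ℕ) : ℂ)) * ((rr β (p ^ (i+1)) : ℝ) : ℂ)
            = -((((p : ℝ) ^ i * rr β (p ^ (i+1))) : ℝ) : ℂ) := by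
          push_cast; ring
        rw [hB, identB pp hβ i, hiv]
        push_cast; ring
      · rw [hstep, ih, if_neg hc0, if_neg (by omega : ¬ (i + 1 ≤ v)), hfc,
          SkF_prime_pow pp hk (i+1), SkF_prime_pow pp hk i, if_neg hc1, if_neg hc0]
        ring

lemma sig_prime_pow {β : ℝ} {p : ℕ} (pp : p.Prime) (e : ℕ) :
    sig β (p ^ (e + 1)) = 1 - ((rr β p : ℝ) : ℂ) := by
  rw [sig_apply, Nat.divisors_prime_pow pp, Finset.sum_map]
  simp only [Function.Embedding.coeFn_mk]
  rw [Finset.sum_range_succ', Finset.sum_range_succ']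
  have hzero : ∀ i ∈ Finset.range e,
      ((moebius (p ^ (i + 1 + 1)) : ℂ) * ((rr β (p ^ (i + 1 + 1)) : ℝ) : ℂ)) = 0 := by
    intro i _
    rw [moebius_apply_prime_pow pp (Nat.succ_ne_zero _), if_neg (by omega)]
    simp
  rw [Finset.sum_congr rfl hzero, Finset.sum_const_zero, zero_add, pow_zero, pow_one,
    moebius_apply_one, moebius_apply_prime pp, rr_one]
  push_cast
  ring

lemma LF_eq_Rfun (β : ℝ) (hβ : 0 < β) {k : ℕ} (hk : k ≠ 0) : LF β k = Rfun β k := by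
  rw [ArithmeticFunction.IsMultiplicative.eq_iff_eq_on_prime_powers _ (isMult_LF β k) _ (isMult_Rfun β k hk)]
  intro p i pp
  rw [LF_prime_pow β hβ hk pp i,
    Rfun_apply β k (pow_ne_zero i pp.pos.ne'), gcd_prime_pow pp hk i,
    Nat.pow_div (min_le_left i _) pp.pos]
  by_cases hc : i ≤ k.factorization p
  · rw [if_pos hc, min_eq_left hc, Nat.sub_self, pow_zero, (isMult_sig β).map_one, mul_one]
    norm_cast
  · obtain ⟨e, he⟩ : ∃ e, i - k.factorization p = e + 1 :=
      ⟨i - k.factorization p - 1, by omega⟩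
    rw [if_neg hc, min_eq_right (by omega), he, sig_prime_pow pp e]
    norm_cast

/-- The `k`-th Fourier coefficient of `ν_{β,n}`. -/
theorem fourier_coeff_nu_beta_n (β : ℝ) (hβ : 0 < β) (n k : ℕ) (hn : 0 < n) (hk : 0 < k) :
    ∑ z ∈ nthRootsFinset n (1 : ℂ), z ^ k * (nuWeight β n z : ℂ) =
      (((n / Nat.gcd n k : ℕ) : ℝ) ^ (-β) *
        ∑ d ∈ (n / Nat.gcd n k).divisors,
          (moebius d : ℝ) * phiBeta β d / (Nat.totient d : ℝ) : ℝ) := by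
  set g := Nat.gcd n k with hgdef
  set m := n / g with hmdef
  have hg : 0 < g := Nat.gcd_pos_of_pos_left k hn
  have h1 : ∀ z : ℂ, ((nuWeight β n z : ℝ) : ℂ) =
      (((n : ℝ) ^ (-β) : ℝ) : ℂ) * ((rr β (orderOf z) : ℝ) : ℂ) := by
    intro z
    rw [nuWeight, rr, mul_div_assoc]
    push_cast
    ring
  calc ∑ z ∈ nthRootsFinset n (1 : ℂ), z ^ k * ((nuWeight β n z : ℝ) : ℂ)
      = (((n : ℝ) ^ (-β) : ℝ) : ℂ) *
        ∑ z ∈ nthRootsFinset n (1 : ℂ), z ^ k * ((rr β (orderOf z) : ℝ) : ℂ) := by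
        rw [Finset.mul_sum]
        exact Finset.sum_congr rfl fun z _ => by rw [h1 z]; ring
    _ = (((n : ℝ) ^ (-β) : ℝ) : ℂ) * ((((g : ℝ) ^ β : ℝ) : ℂ) * sig β m) := by
        rw [sumL β k n hn, LF_eq_Rfun β hβ hk.ne', Rfun_apply β k hn.ne']
    _ = (((m : ℝ) ^ (-β) : ℝ) : ℂ) * sig β m := by
        have hnmg : (n : ℝ) = (m : ℝ) * (g : ℝ) := by
          exact_mod_cast (Nat.div_mul_cancel (Nat.gcd_dvd_left n k)).symm
        have hreal : (n : ℝ) ^ (-β) * (g : ℝ) ^ β = (m : ℝ) ^ (-β) := by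
          rw [hnmg, Real.mul_rpow (by positivity) (by positivity), mul_assoc,
            ← Real.rpow_add (by exact_mod_cast hg), neg_add_cancel, Real.rpow_zero, mul_one]
        rw [← mul_assoc, ← Complex.ofReal_mul, hreal]
    _ = _ := by
        rw [sig_apply]
        push_cast
        rw [Finset.mul_sum, Finset.mul_sum]
        refine Finset.sum_congr rfl fun d _ => ?_
        rw [rr]
        push_cast
        ring
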